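/- Let u be a polynomial with simple roots t_1,...,t_l satisfying the sl_2 Bethe equation, generic with respect to the data. Then the difference equation A(x)v(x+h) + B(x)v(x) + C(x)v(x-h) = 0, with A(x)=∏(x-z_s), C(x)=∏(x-z_s+Λ_s h), and B(x) = -(A(x)u(x+h)+C(x)u(x-h))/u(x) (a polynomial), has a two-dimensional space of polynomial solutions. -/

import Mathlib

open Polynomial Finset

instance : Uncountable ℂ := Complex.ofReal_injective.uncountable

lemma eval_zero_poly (p : Polynomial ℂ) (hp : ∀ x : ℂ, p.eval x = 0) : p = 0 :=
  Polynomial.funext fun x => by simp [hp x]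

/-- periodic-ratio lemma: if P(x)·Q(x-h) = P(x-h)·Q(x) for all x, Q ≠ 0, then P = c Q. -/
lemma shift_ratio {h : ℂ} (hh : h ≠ 0) (P Q : Polynomial ℂ) (hQ : Q ≠ 0)
    (hid : ∀ x : ℂ, P.eval x * Q.eval (x - h) = P.eval (x - h) * Q.eval x) :
    ∃ c : ℂ, P = Polynomial.C c * Q := by
  have hcount : {x : ℂ | ∃ n : ℕ, Q.eval (x + n * h) = 0}.Countable := by
    have hsub : {x : ℂ | ∃ n : ℕ, Q.eval (x + n * h) = 0} ⊆
        ⋃ n : ℕ, (fun r : ℂ => r - n * h) '' {r | Q.IsRoot r} := by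
      rintro x ⟨n, hn⟩
      exact Set.mem_iUnion.2 ⟨n, ⟨x + n * h, hn, by ring⟩⟩
    exact Set.Countable.mono hsub
      (Set.countable_iUnion fun n => (((finite_setOf_isRoot hQ).image _)).countable)
  obtain ⟨x0, hx0⟩ : ∃ x0 : ℂ, ∀ n : ℕ, Q.eval (x0 + n * h) ≠ 0 := by
    by_contra hcon
    push_neg at hcon
    refine Set.not_countable_univ (α := ℂ) ?_
    have huniv : {x : ℂ | ∃ n : ℕ, Q.eval (x + n * h) = 0} = Set.univ := by
      ext x
      simpa using hcon x
    rwa [huniv] at hcount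
  set c := P.eval x0 / Q.eval x0 with hc
  have key : ∀ n : ℕ, P.eval (x0 + n * h) = c * Q.eval (x0 + n * h) := by
    intro n
    induction n with
    | zero =>
      have := hx0 0
      simp only [Nat.cast_zero, zero_mul, add_zero] at this ⊢
      rw [hc, div_mul_cancel₀ _ this]
    | succ n ih =>
      have h1 := hid (x0 + (n + 1 : ℕ) * h)
      have e1 : x0 + ((n : ℕ) + 1 : ℕ) * h - h = x0 + n * h := by push_cast; ring
      rw [e1] at h1
      rw [ih] at h1
      have h2 := hx0 n
      have h3 : P.eval (x0 + (n+1:ℕ) * h) * Q.eval (x0 + n * h)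
          = (c * Q.eval (x0 + (n+1:ℕ) * h)) * Q.eval (x0 + n * h) := by
        linear_combination h1
      exact mul_right_cancel₀ h2 h3
  refine ⟨c, ?_⟩
  have hz : ∀ x ∈ {x : ℂ | ∃ n : ℕ, x = x0 + n * h}, (P - Polynomial.C c * Q).IsRoot x := by
    rintro x ⟨n, rfl⟩
    simp [Polynomial.IsRoot, key n]
  have hinf : {x : ℂ | ∃ n : ℕ, x = x0 + n * h}.Infinite := by
    apply Set.infinite_of_injective_forall_mem (f := fun n : ℕ => x0 + n * h)
    · intro a b hab
      simp only [add_right_inj] at hab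
      exact_mod_cast mul_right_cancel₀ hh hab
    · intro n; exact ⟨n, rfl⟩
  have : P - Polynomial.C c * Q = 0 :=
    Polynomial.eq_zero_of_infinite_isRoot _ (hinf.mono fun x hx => hz x hx)
  linear_combination this

/-- discrete antiderivative -/
lemma exists_delta {h : ℂ} (hh : h ≠ 0) (q : Polynomial ℂ) :
    ∃ g : Polynomial ℂ, ∀ x : ℂ, g.eval (x + h) - g.eval x = q.eval x := by
  suffices H : ∀ N : ℕ, ∀ q : Polynomial ℂ, q.natDegree ≤ N →
      ∃ g : Polynomial ℂ, ∀ x : ℂ, g.eval (x + h) - g.eval x = q.eval x from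
    H q.natDegree q le_rfl
  intro N
  induction N with
  | zero =>
    intro q hq
    rw [Polynomial.natDegree_le_iff_degree_le] at hq
    obtain ⟨a, ha⟩ := Polynomial.natDegree_eq_zero.mp (Nat.le_zero.mp (by
      rwa [← Polynomial.natDegree_le_iff_degree_le] at hq))
    subst ha
    exact ⟨Polynomial.C (a / h) * Polynomial.X, fun x => by
      simp only [Polynomial.eval_mul, Polynomial.eval_C, Polynomial.eval_X]
      linear_combination a * mul_inv_cancel₀ hh⟩
  | succ N ih =>
    intro q hq
    set a := q.coeff (N + 1) with ha
    set G : Polynomial ℂ := Polynomial.C (a / (((N:ℂ) + 2) * h)) * Polynomial.X ^ (N + 2)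
      with hG
    set D : Polynomial ℂ := Polynomial.C (a / (((N:ℂ) + 2) * h)) *
      ((Polynomial.X + Polynomial.C h) ^ (N + 2) - Polynomial.X ^ (N + 2)) with hD
    have hDeval : ∀ x : ℂ, D.eval x = G.eval (x + h) - G.eval x := by
      intro x; simp [hD, hG]; ring
    have hDdeg : (q - D).natDegree ≤ N := by
      have hsub : ((Polynomial.X + Polynomial.C h) ^ (N + 2) -
          (Polynomial.X:Polynomial ℂ) ^ (N + 2)).natDegree ≤ N + 1 := by
        apply Polynomial.natDegree_le_iff_coeff_eq_zero.mpr
        intro m hm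
        rw [Polynomial.coeff_sub, Polynomial.coeff_X_add_C_pow]
        rcases eq_or_lt_of_le (Nat.succ_le_of_lt hm) with he | hlt
        · rw [← he]
          simp [Polynomial.coeff_X_pow]
        · rw [Polynomial.coeff_X_pow, if_neg (by omega), Nat.choose_eq_zero_of_lt (by omega)]
          simp
      have hDdeg' : D.natDegree ≤ N + 1 :=
        le_trans (Polynomial.natDegree_mul_le) (by simpa using hsub)
      apply Polynomial.natDegree_le_iff_coeff_eq_zero.mpr
      intro m hm
      rcases eq_or_lt_of_le (Nat.succ_le_of_lt hm) with he | hlt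
      · rw [← he, Polynomial.coeff_sub]
        have hDc : D.coeff (N + 1) = a := by
          have h2 : ((N:ℂ) + 2) ≠ 0 := by
            have : ((N + 2 : ℕ) : ℂ) ≠ 0 := Nat.cast_ne_zero.mpr (by omega)
            push_cast at this; exact this
          have hc2 : (N + 2) - (N + 1) = 1 := by omega
          rw [hD, Polynomial.coeff_C_mul, Polynomial.coeff_sub,
            Polynomial.coeff_X_add_C_pow, Polynomial.coeff_X_pow, if_neg (by omega),
            hc2, Nat.choose_succ_self_right]
          push_cast
          rw [div_mul_eq_mul_div, div_eq_iff (mul_ne_zero h2 hh)]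
          ring
        rw [hDc, ← ha, sub_self]
      · rw [Polynomial.coeff_sub,
          Polynomial.natDegree_le_iff_coeff_eq_zero.mp hq m (by omega),
          Polynomial.natDegree_le_iff_coeff_eq_zero.mp hDdeg' m (by omega), sub_self]
    obtain ⟨g0, hg0⟩ := ih (q - D) hDdeg
    refine ⟨g0 + G, fun x => ?_⟩
    have := hg0 x
    simp only [Polynomial.eval_sub, Polynomial.eval_add] at this ⊢
    rw [hDeval x] at this
    linear_combination this

lemma prod_dvd_of_roots (s : Finset ℂ) (R : Polynomial ℂ) (hR : ∀ a ∈ s, R.eval a = 0) :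
    (∏ a ∈ s, (Polynomial.X - Polynomial.C a)) ∣ R := by
  induction s using Finset.induction with
  | empty => simpa using dvd_refl R
  | @insert a s hnotmem ih =>
    obtain ⟨q, hq⟩ := ih (fun b hb => hR b (Finset.mem_insert_of_mem hb))
    have hqa : q.eval a = 0 := by
      have h0 := hR a (Finset.mem_insert_self a s)
      rw [hq] at h0
      simp only [Polynomial.eval_mul, Polynomial.eval_prod, Polynomial.eval_sub,
        Polynomial.eval_X, Polynomial.eval_C] at h0
      have hne : (∏ b ∈ s, (a - b)) ≠ 0 :=
        Finset.prod_ne_zero_iff.mpr fun b hb => sub_ne_zero_of_ne (fun he => hnotmem (he ▸ hb))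
      exact (mul_eq_zero.mp h0).resolve_left hne
    obtain ⟨q', hq'⟩ := (Polynomial.dvd_iff_isRoot.mpr hqa : (Polynomial.X - Polynomial.C a) ∣ q)
    rw [Finset.prod_insert hnotmem, hq, hq']
    exact ⟨q', by ring⟩

lemma fam_dvd_of_roots {ι : Type*} [Fintype ι] (a : ι → ℂ) (ha : Function.Injective a)
    (R : Polynomial ℂ) (hR : ∀ i, R.eval (a i) = 0) :
    (∏ i, (Polynomial.X - Polynomial.C (a i))) ∣ R := by
  have h1 : (∏ i, (Polynomial.X - Polynomial.C (a i)))
      = ∏ b ∈ Finset.univ.image a, (Polynomial.X - Polynomial.C b) := by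
    rw [Finset.prod_image (fun i _ j _ hij => ha hij)]
  rw [h1]
  exact prod_dvd_of_roots _ _ (by
    intro b hb
    obtain ⟨i, _, rfl⟩ := Finset.mem_image.mp hb
    exact hR i)

theorem stmt11' (h : ℂ) (hh : h ≠ 0) (n l : ℕ) (z : Fin n → ℂ)
    (hz : Function.Injective z) (Λ : Fin n → ℕ) (hΛ : ∀ s, 1 ≤ Λ s)
    (t : Fin l → ℂ) (hinj : Function.Injective t)
    (hsep : ∀ i k, i ≠ k → t i ≠ t k + h ∧ t i ≠ t k - h)
    (hTt : ∀ j, (∏ s, ∏ i ∈ Finset.range (Λ s), (t j - z s + (i + 1) * h)) ≠ 0)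
    (u : Polynomial ℂ)
    (hu : u = ∏ i, (Polynomial.X - Polynomial.C (t i)))
    (hBethe : ∀ j, (∏ s, (t j - z s + Λ s * h) / (t j - z s))
        * ∏ k ∈ Finset.univ.erase j, (t j - t k - h) / (t j - t k + h) = 1)
    (A C B : Polynomial ℂ)
    (hA : A = ∏ s, (Polynomial.X - Polynomial.C (z s)))
    (hC : C = ∏ s, (Polynomial.X - Polynomial.C (z s - Λ s * h)))
    (hB : ∀ x : ℂ, B.eval x * u.eval x
      = -(A.eval x * u.eval (x + h) + C.eval x * u.eval (x - h))) :
    ∃ v : Polynomial ℂ,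
      (∀ x : ℂ, u.eval x * v.eval (x + h) - u.eval (x + h) * v.eval x
        = (∏ s, ∏ i ∈ Finset.range (Λ s), (Polynomial.X - Polynomial.C (z s - (i + 1) * h))).eval x) := by
  -- basic facts
  have hu_ne : u ≠ 0 := by
    rw [hu]; exact (monic_prod_of_monic _ _ fun i _ => monic_X_sub_C _).ne_zero
  have huev : ∀ x : ℂ, u.eval x = ∏ i, (x - t i) := by
    intro x; rw [hu, Polynomial.eval_prod]; simp
  have huj : ∀ j, u.eval (t j) = 0 := by
    intro j; rw [huev]
    exact Finset.prod_eq_zero (Finset.mem_univ j) (by ring)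
  have hup : ∀ j, u.eval (t j + h) ≠ 0 := by
    intro j; rw [huev]
    apply Finset.prod_ne_zero_iff.mpr
    intro k _
    rcases eq_or_ne j k with rfl | hk
    · simpa using hh
    · intro hcon; exact (hsep j k hk).2 (by linear_combination hcon)
  have hum : ∀ j, u.eval (t j - h) ≠ 0 := by
    intro j; rw [huev]
    apply Finset.prod_ne_zero_iff.mpr
    intro k _
    rcases eq_or_ne j k with rfl | hk
    · intro hcon; exact hh (by linear_combination -hcon)
    · intro hcon; exact (hsep j k hk).1 (by linear_combination hcon)
  set Tp : Polynomial ℂ :=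
    ∏ s, ∏ i ∈ Finset.range (Λ s), (Polynomial.X - Polynomial.C (z s - (i + 1) * h)) with hTp
  have hTev : ∀ y : ℂ, Tp.eval y = ∏ s, ∏ i ∈ Finset.range (Λ s), (y - z s + (i + 1) * h) := by
    intro y
    rw [hTp, Polynomial.eval_prod]
    refine Finset.prod_congr rfl fun s _ => ?_
    rw [Polynomial.eval_prod]
    exact Finset.prod_congr rfl fun i _ => by
      simp only [Polynomial.eval_sub, Polynomial.eval_X, Polynomial.eval_C]; ring
  have hTevm : ∀ y : ℂ, Tp.eval (y - h) = ∏ s, ∏ i ∈ Finset.range (Λ s), (y - z s + i * h) := by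
    intro y
    rw [hTev]
    exact Finset.prod_congr rfl fun s _ => Finset.prod_congr rfl fun i _ => by ring
  have hT_ne : Tp ≠ 0 := by
    rw [hTp]
    exact (monic_prod_of_monic _ _ fun s _ =>
      monic_prod_of_monic _ _ fun i _ => monic_X_sub_C _).ne_zero
  have hTt' : ∀ j, Tp.eval (t j) ≠ 0 := by intro j; rw [hTev]; exact hTt j
  -- the telescoping identity
  have tel : ∀ (a : ℂ) (m : ℕ),
      a * ∏ i ∈ Finset.range m, (a + (i + 1) * h)
        = (a + m * h) * ∏ i ∈ Finset.range m, (a + i * h) := by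
    intro a m
    have h1 : (∏ i ∈ Finset.range (m + 1), (a + i * h))
        = a * ∏ i ∈ Finset.range m, (a + (i + 1) * h) := by
      rw [Finset.prod_range_succ']
      push_cast
      ring
    have h2 : (∏ i ∈ Finset.range (m + 1), (a + i * h))
        = (∏ i ∈ Finset.range m, (a + i * h)) * (a + m * h) := by
      rw [Finset.prod_range_succ]
    rw [← h1, h2]; ring
  -- A(x) T(x) = C(x) T(x-h)
  have hACT : ∀ x : ℂ, A.eval x * Tp.eval x = C.eval x * Tp.eval (x - h) := by
    intro x
    rw [hTev, hTevm, hA, hC, Polynomial.eval_prod, Polynomial.eval_prod,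
      ← Finset.prod_mul_distrib, ← Finset.prod_mul_distrib]
    refine Finset.prod_congr rfl fun s _ => ?_
    simp only [Polynomial.eval_sub, Polynomial.eval_X, Polynomial.eval_C]
    have := tel (x - z s) (Λ s)
    linear_combination this
  -- key consequence of the Bethe equations
  have hkey : ∀ j, Tp.eval (t j) * u.eval (t j - h) + Tp.eval (t j - h) * u.eval (t j + h) = 0 := by
    intro j
    have hden1 : ∀ s, t j - z s ≠ 0 := by
      intro s hcon
      apply one_ne_zero (α := ℂ)
      rw [← hBethe j]
      apply mul_eq_zero_of_left
      apply Finset.prod_eq_zero (Finset.mem_univ s)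
      rw [hcon, div_zero]
    have hden2 : ∀ k ∈ Finset.univ.erase j, t j - t k + h ≠ 0 := by
      intro k hk hcon
      exact (hsep j k (Ne.symm (Finset.ne_of_mem_erase hk))).2 (by linear_combination hcon)
    set P1 := ∏ s, (t j - z s + Λ s * h) with hP1
    set Q1 := ∏ s, (t j - z s) with hQ1
    set P2 := ∏ k ∈ Finset.univ.erase j, (t j - t k - h) with hP2
    set Q2 := ∏ k ∈ Finset.univ.erase j, (t j - t k + h) with hQ2
    have hQ1ne : Q1 ≠ 0 := Finset.prod_ne_zero_iff.mpr fun s _ => hden1 s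
    have hQ2ne : Q2 ≠ 0 := Finset.prod_ne_zero_iff.mpr hden2
    have hPQ : P1 * P2 = Q1 * Q2 := by
      have hb := hBethe j
      rw [Finset.prod_div_distrib, Finset.prod_div_distrib] at hb
      field_simp at hb
      linear_combination (div_eq_one_iff_eq (mul_ne_zero hQ1ne hQ2ne)).mp hb
    have hu_p : u.eval (t j + h) = h * Q2 := by
      rw [huev, ← Finset.mul_prod_erase Finset.univ _ (Finset.mem_univ j), hQ2]
      have e1 : t j + h - t j = h := by ring
      rw [e1]
      congr 1
      exact Finset.prod_congr rfl fun k _ => by ring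
    have hu_m : u.eval (t j - h) = -h * P2 := by
      rw [huev, ← Finset.mul_prod_erase Finset.univ _ (Finset.mem_univ j), hP2]
      have e1 : t j - h - t j = -h := by ring
      rw [e1]
      congr 1
      exact Finset.prod_congr rfl fun k _ => by ring
    have hT_j : Tp.eval (t j) * Q1 = P1 * Tp.eval (t j - h) := by
      rw [hTev, hTevm, hQ1, hP1, ← Finset.prod_mul_distrib, ← Finset.prod_mul_distrib]
      refine Finset.prod_congr rfl fun s _ => ?_
      have := tel (t j - z s) (Λ s)
      linear_combination this
    have hmain : Tp.eval (t j) * P2 = Tp.eval (t j - h) * Q2 := by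
      apply mul_right_cancel₀ hQ1ne
      linear_combination Tp.eval (t j - h) * hPQ + P2 * hT_j
    rw [hu_p, hu_m]
    linear_combination (-h) * hmain
  -- construction of the second solution via interpolation
  have hinjOn : Set.InjOn t (Finset.univ : Finset (Fin l)) := fun a _ b _ hab => hinj hab
  set r : Fin l → ℂ := fun j => -Tp.eval (t j) / u.eval (t j + h) with hr
  set v0 : Polynomial ℂ := Lagrange.interpolate Finset.univ t r with hv0def
  have hv0 : ∀ j, v0.eval (t j) = r j := fun j =>
    Lagrange.eval_interpolate_at_node r hinjOn (Finset.mem_univ j)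
  set usp : Polynomial ℂ := ∏ i, (Polynomial.X - Polynomial.C (t i - h)) with huspdef
  have husp : ∀ x : ℂ, usp.eval x = u.eval (x + h) := by
    intro x
    rw [huspdef, Polynomial.eval_prod, huev]
    exact Finset.prod_congr rfl fun i _ => by
      simp only [Polynomial.eval_sub, Polynomial.eval_X, Polynomial.eval_C]; ring
  set R : Polynomial ℂ :=
    Tp - (u * v0.comp (Polynomial.X + Polynomial.C h) - usp * v0) with hRdef
  have hRev : ∀ x : ℂ, R.eval x
      = Tp.eval x - (u.eval x * v0.eval (x + h) - u.eval (x + h) * v0.eval x) := by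
    intro x
    rw [hRdef]
    simp only [Polynomial.eval_sub, Polynomial.eval_mul, Polynomial.eval_comp,
      Polynomial.eval_add, Polynomial.eval_X, Polynomial.eval_C, husp]
  have hv0' : ∀ j, u.eval (t j + h) * v0.eval (t j) = -Tp.eval (t j) := by
    intro j
    rw [hv0, hr]
    rw [mul_div_assoc']
    exact mul_div_cancel_left₀ _ (hup j)
  have hR1 : ∀ j, R.eval (t j) = 0 := by
    intro j
    rw [hRev, huj j]
    linear_combination hv0' j
  have hR2 : ∀ j, R.eval (t j - h) = 0 := by
    intro j
    have e1 : t j - h + h = t j := by ring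
    rw [hRev, e1, huj j]
    have h3 : u.eval (t j + h) * (Tp.eval (t j - h)
        - (u.eval (t j - h) * v0.eval (t j) - 0 * v0.eval (t j - h))) = 0 := by
      linear_combination hkey j - u.eval (t j - h) * hv0' j
    exact mul_left_cancel₀ (hup j) (h3.trans (mul_zero _).symm)
  have hdvd : u * usp ∣ R := by
    have hprod : (∏ i : Fin l ⊕ Fin l,
        (Polynomial.X - Polynomial.C (Sum.elim t (fun j => t j - h) i))) = u * usp := by
      rw [Fintype.prod_sum_type, hu, huspdef]
      simp only [Sum.elim_inl, Sum.elim_inr]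
    rw [← hprod]
    apply fam_dvd_of_roots
    · intro a b hab
      rcases a with a | a <;> rcases b with b | b <;> simp only [Sum.elim_inl, Sum.elim_inr] at hab
      · exact congrArg Sum.inl (hinj hab)
      · exfalso
        rcases eq_or_ne a b with rfl | hne
        · exact hh (by linear_combination hab)
        · exact (hsep a b hne).2 (by linear_combination hab)
      · exfalso
        rcases eq_or_ne a b with rfl | hne
        · exact hh (by linear_combination -hab)
        · exact (hsep b a hne.symm).2 (by linear_combination -hab)
      · exact congrArg Sum.inr (hinj (by linear_combination hab))
    · intro i
      rcases i with j | j
      · exact hR1 j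
      · exact hR2 j
  obtain ⟨q, hq⟩ := hdvd
  obtain ⟨g, hg⟩ := exists_delta hh q
  refine ⟨v0 + u * g, fun x => ?_⟩
  have hqx : R.eval x = u.eval x * u.eval (x + h) * q.eval x := by
    rw [hq]
    simp only [Polynomial.eval_mul, husp]
  have hgx := hg x
  simp only [Polynomial.eval_add, Polynomial.eval_mul]
  linear_combination hRev x - hqx + u.eval x * u.eval (x + h) * hgx



/-- The space of polynomial solutions of the difference equation
`A(x)u(x+h) + B(x)u(x) + C(x)u(x-h) = 0`. -/
noncomputable def solSpace (h : ℂ) (A B C : Polynomial ℂ) : Submodule ℂ (Polynomial ℂ) where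
  carrier := {u | ∀ x : ℂ,
    A.eval x * u.eval (x + h) + B.eval x * u.eval x + C.eval x * u.eval (x - h) = 0}
  add_mem' := by
    intro a b ha hb x
    have h1 := ha x
    have h2 := hb x
    simp only [Polynomial.eval_add]
    linear_combination h1 + h2
  zero_mem' := by intro x; simp
  smul_mem' := by
    intro c a ha x
    have h1 := ha x
    simp only [Polynomial.eval_smul, smul_eq_mul]
    linear_combination c * h1

/-- for `u` generic with roots forming a solution of the sl₂ Bethe
equation, the difference equation with `A(x)=∏(x-z_s)`, `C(x)=∏(x-z_s+Λ_s h)` and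
`B(x) = -(A(x)u(x+h)+C(x)u(x-h))/u(x)` has a two-dimensional space of polynomial
solutions. -/
theorem stmt11 (h : ℂ) (hh : h ≠ 0) (n l : ℕ) (z : Fin n → ℂ)
    (hz : Function.Injective z) (Λ : Fin n → ℕ) (hΛ : ∀ s, 1 ≤ Λ s)
    (t : Fin l → ℂ) (hinj : Function.Injective t)
    (hsep : ∀ i k, i ≠ k → t i ≠ t k + h ∧ t i ≠ t k - h)
    (hTt : ∀ j, (∏ s, ∏ i ∈ Finset.range (Λ s), (t j - z s + (i + 1) * h)) ≠ 0)
    (u : Polynomial ℂ)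
    (hu : u = ∏ i, (Polynomial.X - Polynomial.C (t i)))
    (hBethe : ∀ j, (∏ s, (t j - z s + Λ s * h) / (t j - z s))
        * ∏ k ∈ Finset.univ.erase j, (t j - t k - h) / (t j - t k + h) = 1)
    (A C B : Polynomial ℂ)
    (hA : A = ∏ s, (Polynomial.X - Polynomial.C (z s)))
    (hC : C = ∏ s, (Polynomial.X - Polynomial.C (z s - Λ s * h)))
    (hB : ∀ x : ℂ, B.eval x * u.eval x
      = -(A.eval x * u.eval (x + h) + C.eval x * u.eval (x - h))) :
    Module.rank ℂ (solSpace h A B C) = 2 := by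
  obtain ⟨v, hWr⟩ := stmt11' h hh n l z hz Λ hΛ t hinj hsep hTt u hu hBethe A C B hA hC hB
  set Tp : Polynomial ℂ :=
    ∏ s, ∏ i ∈ Finset.range (Λ s), (Polynomial.X - Polynomial.C (z s - (i + 1) * h)) with hTp
  have hu_ne : u ≠ 0 := by
    rw [hu]; exact (monic_prod_of_monic _ _ fun i _ => monic_X_sub_C _).ne_zero
  have hA_ne : A ≠ 0 := by
    rw [hA]; exact (monic_prod_of_monic _ _ fun i _ => monic_X_sub_C _).ne_zero
  have hT_ne : Tp ≠ 0 := by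
    rw [hTp]
    exact (monic_prod_of_monic _ _ fun s _ =>
      monic_prod_of_monic _ _ fun i _ => monic_X_sub_C _).ne_zero
  have hTev : ∀ y : ℂ, Tp.eval y = ∏ s, ∏ i ∈ Finset.range (Λ s), (y - z s + (i + 1) * h) := by
    intro y
    rw [hTp, Polynomial.eval_prod]
    refine Finset.prod_congr rfl fun s _ => ?_
    rw [Polynomial.eval_prod]
    exact Finset.prod_congr rfl fun i _ => by
      simp only [Polynomial.eval_sub, Polynomial.eval_X, Polynomial.eval_C]; ring
  have hTevm : ∀ y : ℂ, Tp.eval (y - h) = ∏ s, ∏ i ∈ Finset.range (Λ s), (y - z s + i * h) := by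
    intro y
    rw [hTev]
    exact Finset.prod_congr rfl fun s _ => Finset.prod_congr rfl fun i _ => by ring
  have tel : ∀ (a : ℂ) (m : ℕ),
      a * ∏ i ∈ Finset.range m, (a + (i + 1) * h)
        = (a + m * h) * ∏ i ∈ Finset.range m, (a + i * h) := by
    intro a m
    have h1 : (∏ i ∈ Finset.range (m + 1), (a + i * h))
        = a * ∏ i ∈ Finset.range m, (a + (i + 1) * h) := by
      rw [Finset.prod_range_succ']
      push_cast
      ring
    have h2 : (∏ i ∈ Finset.range (m + 1), (a + i * h))
        = (∏ i ∈ Finset.range m, (a + i * h)) * (a + m * h) := by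
      rw [Finset.prod_range_succ]
    rw [← h1, h2]; ring
  have hACT : ∀ x : ℂ, A.eval x * Tp.eval x = C.eval x * Tp.eval (x - h) := by
    intro x
    rw [hTev, hTevm, hA, hC, Polynomial.eval_prod, Polynomial.eval_prod,
      ← Finset.prod_mul_distrib, ← Finset.prod_mul_distrib]
    refine Finset.prod_congr rfl fun s _ => ?_
    simp only [Polynomial.eval_sub, Polynomial.eval_X, Polynomial.eval_C]
    linear_combination tel (x - z s) (Λ s)
  -- u is a solution
  have huSol : ∀ x : ℂ, A.eval x * u.eval (x + h) + B.eval x * u.eval x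
      + C.eval x * u.eval (x - h) = 0 := fun x => by linear_combination hB x
  -- v is a solution
  have hvSol : ∀ x : ℂ, A.eval x * v.eval (x + h) + B.eval x * v.eval x
      + C.eval x * v.eval (x - h) = 0 := by
    have hE : ∀ x : ℂ, u.eval x * (A.eval x * v.eval (x + h) + B.eval x * v.eval x
        + C.eval x * v.eval (x - h)) = 0 := by
      intro x
      have h1 := hWr x
      have h2 := hWr (x - h)
      have e1 : x - h + h = x := by ring
      rw [e1] at h2
      linear_combination A.eval x * h1 - C.eval x * h2 + v.eval x * huSol x + hACT x
    set Ep : Polynomial ℂ := A * v.comp (Polynomial.X + Polynomial.C h) + B * v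
      + C * v.comp (Polynomial.X - Polynomial.C h) with hEp
    have hEpev : ∀ x : ℂ, Ep.eval x = A.eval x * v.eval (x + h) + B.eval x * v.eval x
        + C.eval x * v.eval (x - h) := by
      intro x
      simp [hEp, Polynomial.eval_comp]
    have hzero : u * Ep = 0 := eval_zero_poly _ fun x => by
      rw [Polynomial.eval_mul, hEpev x]; exact hE x
    have hEp0 : Ep = 0 := (mul_eq_zero.mp hzero).resolve_left hu_ne
    intro x
    rw [← hEpev x, hEp0, Polynomial.eval_zero]
  -- usp and polynomial Wronskian machinery
  set usp : Polynomial ℂ := ∏ i, (Polynomial.X - Polynomial.C (t i - h)) with huspdef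
  have husp : ∀ x : ℂ, usp.eval x = u.eval (x + h) := by
    intro x
    rw [huspdef, Polynomial.eval_prod, hu, Polynomial.eval_prod]
    exact Finset.prod_congr rfl fun i _ => by
      simp only [Polynomial.eval_sub, Polynomial.eval_X, Polynomial.eval_C]; ring
  -- any solution w has Wronskian with u equal to c * Tp
  have hWrc : ∀ w : Polynomial ℂ, (∀ x : ℂ, A.eval x * w.eval (x + h) + B.eval x * w.eval x
      + C.eval x * w.eval (x - h) = 0) → ∃ c : ℂ, ∀ x : ℂ,
        u.eval x * w.eval (x + h) - u.eval (x + h) * w.eval x = c * Tp.eval x := by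
    intro w hw
    set Wp : Polynomial ℂ := u * w.comp (Polynomial.X + Polynomial.C h) - usp * w with hWp
    have hWev : ∀ x : ℂ, Wp.eval x = u.eval x * w.eval (x + h) - u.eval (x + h) * w.eval x := by
      intro x
      simp [hWp, Polynomial.eval_comp, husp]
    have hWevm : ∀ x : ℂ, Wp.eval (x - h)
        = u.eval (x - h) * w.eval x - u.eval x * w.eval (x - h) := by
      intro x
      rw [hWev (x - h)]
      have e1 : x - h + h = x := by ring
      rw [e1]
    have step1 : ∀ x : ℂ, A.eval x * Wp.eval x = C.eval x * Wp.eval (x - h) := by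
      intro x
      rw [hWev, hWevm]
      linear_combination u.eval x * hw x - w.eval x * huSol x
    -- polynomial identity Wp(x) Tp(x-h) = Wp(x-h) Tp(x)
    set Wpm : Polynomial ℂ := Wp.comp (Polynomial.X - Polynomial.C h) with hWpm
    set Tpm : Polynomial ℂ := Tp.comp (Polynomial.X - Polynomial.C h) with hTpm
    have hW1 : A * (Wp * Tpm - Tp * Wpm) = 0 := by
      apply eval_zero_poly
      intro x
      simp only [Polynomial.eval_mul, Polynomial.eval_sub, Polynomial.eval_comp,
        Polynomial.eval_X, Polynomial.eval_C, hWpm, hTpm]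
      linear_combination Tp.eval (x - h) * step1 x - Wp.eval (x - h) * hACT x
    have hW2 : Wp * Tpm - Tp * Wpm = 0 := (mul_eq_zero.mp hW1).resolve_left hA_ne
    have hW3 : ∀ x : ℂ, Wp.eval x * Tp.eval (x - h) = Wp.eval (x - h) * Tp.eval x := by
      intro x
      have := congrArg (Polynomial.eval x) hW2
      simp only [Polynomial.eval_mul, Polynomial.eval_sub, Polynomial.eval_comp,
        Polynomial.eval_X, Polynomial.eval_C, Polynomial.eval_zero, hWpm, hTpm] at this
      linear_combination this
    obtain ⟨c, hc⟩ := shift_ratio hh Wp Tp hT_ne hW3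
    exact ⟨c, fun x => by
      rw [← hWev x, hc]
      simp⟩
  -- span {u, v} = solSpace
  have humem : u ∈ solSpace h A B C := huSol
  have hvmem : v ∈ solSpace h A B C := hvSol
  have hrange : Set.range ![u, v] = {u, v} := by
    ext p
    simp [Fin.exists_fin_two]
    tauto
  have hspan : Submodule.span ℂ (Set.range ![u, v]) = solSpace h A B C := by
    apply le_antisymm
    · rw [Submodule.span_le, hrange]
      rintro p (rfl | rfl)
      · exact humem
      · exact hvmem
    · intro w hw
      have hw' : ∀ x : ℂ, A.eval x * w.eval (x + h) + B.eval x * w.eval x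
          + C.eval x * w.eval (x - h) = 0 := hw
      obtain ⟨c, hc⟩ := hWrc w hw'
      -- p := w - c • v has zero Wronskian with u
      have hp : ∀ x : ℂ, (w - Polynomial.C c * v).eval x * u.eval (x - h)
          = (w - Polynomial.C c * v).eval (x - h) * u.eval x := by
        intro x
        have h1 := hc (x - h)
        have h2 := hWr (x - h)
        have e1 : x - h + h = x := by ring
        rw [e1] at h1 h2
        simp only [Polynomial.eval_sub, Polynomial.eval_mul, Polynomial.eval_C]
        linear_combination h1 - c * h2
      obtain ⟨c', hc'⟩ := shift_ratio hh (w - Polynomial.C c * v) u hu_ne hp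
      have hwrep : w = c' • u + c • v := by
        rw [Polynomial.smul_eq_C_mul, Polynomial.smul_eq_C_mul]
        linear_combination hc'
      rw [hwrep]
      apply Submodule.add_mem
      · exact Submodule.smul_mem _ _ (Submodule.subset_span (by rw [hrange]; left; rfl))
      · exact Submodule.smul_mem _ _ (Submodule.subset_span (by rw [hrange]; right; rfl))
  -- linear independence
  have hTx : ∃ x : ℂ, Tp.eval x ≠ 0 := by
    by_contra hcon
    push_neg at hcon
    exact hT_ne (eval_zero_poly _ hcon)
  have li : LinearIndependent ℂ ![u, v] := by
    rw [LinearIndependent.pair_iff]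
    intro s τ hst
    have heval : ∀ y : ℂ, s * u.eval y + τ * v.eval y = 0 := by
      intro y
      have := congrArg (Polynomial.eval y) hst
      simpa using this
    have hτ : ∀ x : ℂ, τ * Tp.eval x = 0 := by
      intro x
      linear_combination (-τ) * hWr x + u.eval x * heval (x + h) - u.eval (x + h) * heval x
    obtain ⟨x, hx⟩ := hTx
    have hτ0 : τ = 0 := by
      rcases mul_eq_zero.mp (hτ x) with h' | h'
      · exact h'
      · exact absurd h' hx
    subst hτ0
    refine ⟨?_, rfl⟩
    have hsu : s • u = 0 := by
      rw [zero_smul, add_zero] at hst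
      exact hst
    rcases smul_eq_zero.mp hsu with h' | h'
    · exact h'
    · exact absurd h' hu_ne
  rw [← hspan, rank_span li]
  rw [Cardinal.mk_range_eq _ li.injective]
  simp
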